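/- Let B ⊂ ℝ³ be a closed ball of radius R > 0 (with arbitrary center). Then the integral over the set {(s,t) ∈ ℝ² : (s+t, s−t, 4st) ∈ B} of the function 2√(1+8s²) with respect to Lebesgue measure on ℝ² is at most πR². -/

import Mathlib

open MeasureTheory Real


private lemma saddle_sec_bound (a b e R s : ℝ) (hR : 0 < R) :
    ENNReal.ofReal (2 * Real.sqrt (1 + 8 * s ^ 2)) *
      volume {t : ℝ | (s + t - a) ^ 2 + (s - t - b) ^ 2 + (4 * s * t - e) ^ 2 ≤ R ^ 2} ≤
    ENNReal.ofReal (2 * Real.sqrt 2 * Real.sqrt (R ^ 2 - 2 * (s - (a + b) / 2) ^ 2)) := by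
  set K := {t : ℝ | (s + t - a) ^ 2 + (s - t - b) ^ 2 + (4 * s * t - e) ^ 2 ≤ R ^ 2} with hK
  rcases Set.eq_empty_or_nonempty K with h | ⟨t₁, ht₁⟩
  · simp [h]
  · have ht₁' : (s + t₁ - a) ^ 2 + (s - t₁ - b) ^ 2 + (4 * s * t₁ - e) ^ 2 ≤ R ^ 2 := ht₁
    have hs : 2 * (s - (a + b) / 2) ^ 2 ≤ R ^ 2 := by nlinarith [sq_nonneg (2 * t₁ - a + b)]
    set r := Real.sqrt (R ^ 2 - 2 * (s - (a + b) / 2) ^ 2) with hrdef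
    have hr0 : 0 ≤ r := Real.sqrt_nonneg _
    have hr2 : r ^ 2 = R ^ 2 - 2 * (s - (a + b) / 2) ^ 2 := Real.sq_sqrt (by linarith)
    set q := Real.sqrt (2 + 16 * s ^ 2) with hqdef
    have hq2 : q ^ 2 = 2 + 16 * s ^ 2 := Real.sq_sqrt (by positivity)
    have hqpos : 0 < q := Real.sqrt_pos.mpr (by positivity)
    have hpos : (0:ℝ) < 2 + 16 * s ^ 2 := by positivity
    set m := (2 * ((a - b) / 2) + 4 * s * e) / (2 + 16 * s ^ 2) with hmdef
    have hsub : K ⊆ Set.Icc (m - r / q) (m + r / q) := by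
      intro t ht
      have ht' : (s + t - a) ^ 2 + (s - t - b) ^ 2 + (4 * s * t - e) ^ 2 ≤ R ^ 2 := ht
      have h1 : (2 * (t - (a - b) / 2) + 4 * s * (4 * s * t - e)) ^ 2 ≤
          (2 + 16 * s ^ 2) * (R ^ 2 - 2 * (s - (a + b) / 2) ^ 2) := by
        nlinarith [sq_nonneg ((4 * s * t - e) - 4 * s * (t - (a - b) / 2))]
      have htm : (t - m) * (2 + 16 * s ^ 2) = 2 * (t - (a - b) / 2) + 4 * s * (4 * s * t - e) := by
        rw [hmdef]; field_simp; ring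
      have h4 : (t - m) ^ 2 * (2 + 16 * s ^ 2) ^ 2 ≤ (r / q) ^ 2 * (2 + 16 * s ^ 2) ^ 2 := by
        calc (t - m) ^ 2 * (2 + 16 * s ^ 2) ^ 2 = ((t - m) * (2 + 16 * s ^ 2)) ^ 2 := by ring
        _ ≤ (2 + 16 * s ^ 2) * (R ^ 2 - 2 * (s - (a + b) / 2) ^ 2) := by rw [htm]; exact h1
        _ = (r / q) ^ 2 * (2 + 16 * s ^ 2) ^ 2 := by
            rw [div_pow, hq2, hr2]; field_simp
      have h2 : (t - m) ^ 2 ≤ (r / q) ^ 2 :=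
        le_of_mul_le_mul_right h4 (by positivity)
      have h5 : |t - m| ≤ r / q := by
        have := Real.sqrt_le_sqrt h2
        rwa [Real.sqrt_sq_eq_abs, Real.sqrt_sq (by positivity)] at this
      rcases abs_le.mp h5 with ⟨h6, h7⟩
      exact Set.mem_Icc.mpr ⟨by linarith, by linarith⟩
    have hvol : volume K ≤ ENNReal.ofReal (2 * (r / q)) := by
      calc volume K ≤ volume (Set.Icc (m - r / q) (m + r / q)) := measure_mono hsub
      _ = ENNReal.ofReal (2 * (r / q)) := by rw [Real.volume_Icc]; ring_nf
    calc ENNReal.ofReal (2 * Real.sqrt (1 + 8 * s ^ 2)) * volume K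
        ≤ ENNReal.ofReal (2 * Real.sqrt (1 + 8 * s ^ 2)) * ENNReal.ofReal (2 * (r / q)) :=
          mul_le_mul_right hvol _
      _ = ENNReal.ofReal (2 * Real.sqrt (1 + 8 * s ^ 2) * (2 * (r / q))) :=
          (ENNReal.ofReal_mul (by positivity)).symm
      _ = ENNReal.ofReal (2 * Real.sqrt 2 * r) := by
          congr 1
          have h1pos : 0 < Real.sqrt (1 + 8 * s ^ 2) := Real.sqrt_pos.mpr (by positivity)
          have hq' : q = Real.sqrt 2 * Real.sqrt (1 + 8 * s ^ 2) := by
            rw [hqdef, show (2 + 16 * s ^ 2 : ℝ) = 2 * (1 + 8 * s ^ 2) by ring,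
              Real.sqrt_mul (by norm_num)]
          have h2pos : 0 < Real.sqrt 2 := Real.sqrt_pos.mpr (by norm_num)
          rw [hq']
          field_simp
          linear_combination (-r) *
            (Real.sq_sqrt (show (0:ℝ) ≤ 2 by norm_num))


private lemma saddle_final_integral (R s₀ : ℝ) (hR : 0 < R) :
    ∫⁻ s : ℝ, ENNReal.ofReal (2 * Real.sqrt 2 * Real.sqrt (R ^ 2 - 2 * (s - s₀) ^ 2)) ≤
      ENNReal.ofReal (Real.pi * R ^ 2) := by
  have h2pos : (0:ℝ) < Real.sqrt 2 := Real.sqrt_pos.mpr (by norm_num)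
  have h2sq : (Real.sqrt 2) ^ 2 = 2 := Real.sq_sqrt (by norm_num)
  set c : ℝ := R / Real.sqrt 2 with hcdef
  have hcpos : 0 < c := by positivity
  set F : ℝ → ℝ := fun s => 2 * Real.sqrt 2 * Real.sqrt (R ^ 2 - 2 * (s - s₀) ^ 2) with hF
  have hFcont : Continuous F := by fun_prop
  have hFnn : ∀ s, 0 ≤ F s := fun s => by positivity
  set I := Set.Icc (s₀ - c) (s₀ + c) with hI
  have hvanish : ∀ s ∉ I, F s = 0 := by
    intro s hs
    have hc2 : c ^ 2 = R ^ 2 / 2 := by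
      rw [hcdef, div_pow, h2sq]
    have h : R ^ 2 - 2 * (s - s₀) ^ 2 ≤ 0 := by
      rw [hI, Set.mem_Icc] at hs
      rcases lt_or_ge s (s₀ - c) with h | h
      · nlinarith
      · have h2 : s₀ + c < s := by
          by_contra hh
          push_neg at hh
          exact hs ⟨h, hh⟩
        nlinarith
    simp [hF, Real.sqrt_eq_zero_of_nonpos h]
  have step1 : ∫⁻ s : ℝ, ENNReal.ofReal (F s) = ∫⁻ s in I, ENNReal.ofReal (F s) := by
    rw [← lintegral_indicator measurableSet_Icc]
    refine lintegral_congr fun s => ?_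
    by_cases h : s ∈ I
    · rw [Set.indicator_of_mem h]
    · rw [Set.indicator_of_notMem h, hvanish s h]; simp
  have step2 : ∫⁻ s in I, ENNReal.ofReal (F s) = ENNReal.ofReal (∫ s in I, F s) := by
    rw [← ofReal_integral_eq_lintegral_ofReal (hFcont.integrableOn_Icc)
      (Filter.Eventually.of_forall fun s => hFnn s)]
  have hval : ∫ s in I, F s = Real.pi * R ^ 2 := by
    rw [hI, MeasureTheory.integral_Icc_eq_integral_Ioc,
      ← intervalIntegral.integral_of_le (by linarith)]
    have e1 : (∫ s in (s₀ - c)..(s₀ + c), F s) =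
        ∫ w in (-c)..c, 2 * Real.sqrt 2 * Real.sqrt (R ^ 2 - 2 * w ^ 2) := by
      have := intervalIntegral.integral_comp_sub_right
        (a := s₀ - c) (b := s₀ + c)
        (fun w => 2 * Real.sqrt 2 * Real.sqrt (R ^ 2 - 2 * w ^ 2)) s₀
      simp only [sub_sub_cancel_left, add_sub_cancel_left] at this
      rw [← this]
    rw [e1]
    have e2 : (∫ w in (-c)..c, 2 * Real.sqrt 2 * Real.sqrt (R ^ 2 - 2 * w ^ 2)) =
        2 * ∫ u in (-R)..R, Real.sqrt (R ^ 2 - u ^ 2) := by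
      have key := intervalIntegral.integral_comp_mul_left
        (a := -c) (b := c)
        (fun u => 2 * Real.sqrt 2 * Real.sqrt (R ^ 2 - u ^ 2)) (ne_of_gt h2pos)
      have harg : ∀ w : ℝ, 2 * Real.sqrt 2 * Real.sqrt (R ^ 2 - (Real.sqrt 2 * w) ^ 2)
          = 2 * Real.sqrt 2 * Real.sqrt (R ^ 2 - 2 * w ^ 2) := by
        intro w; rw [mul_pow, h2sq]
      simp only [harg] at key
      have hend2 : Real.sqrt 2 * c = R := by
        rw [hcdef, mul_comm, div_mul_cancel₀ _ (ne_of_gt h2pos)]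
      have hend1 : Real.sqrt 2 * -c = -R := by
        rw [mul_neg, hend2]
      have hXgen : ∀ X : ℝ, (Real.sqrt 2)⁻¹ * (2 * Real.sqrt 2 * X) = 2 * X := by
        intro X
        field_simp
      rw [key, hend1, hend2, intervalIntegral.integral_const_mul, smul_eq_mul, hXgen]
    rw [e2]
    have e3 : (∫ u in (-R)..R, Real.sqrt (R ^ 2 - u ^ 2)) = Real.pi * R ^ 2 / 2 := by
      have harg : ∀ u : ℝ, Real.sqrt (R ^ 2 - u ^ 2) = R * Real.sqrt (1 - (u / R) ^ 2) := by
        intro u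
        rw [show R ^ 2 - u ^ 2 = R ^ 2 * (1 - (u / R) ^ 2) by field_simp,
          Real.sqrt_mul (by positivity), Real.sqrt_sq hR.le]
      simp only [harg]
      have key := intervalIntegral.integral_comp_div
        (a := -R) (b := R)
        (fun x => R * Real.sqrt (1 - x ^ 2)) (ne_of_gt hR)
      rw [key, show -R / R = (-1 : ℝ) by field_simp, show R / R = (1 : ℝ) by field_simp,
        intervalIntegral.integral_const_mul, integral_sqrt_one_sub_sq, smul_eq_mul]
      ring
    rw [e3]; ring
  rw [step1, step2, hval]

/-- The integral of `2√(1+8s²)` over the parameters `(s,t)` for which the saddle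
point `(s+t, s−t, 4st)` lies in a closed ball of radius `R` is at most `πR²`. -/
theorem integral_over_saddle_preimage_le (c : ℝ × ℝ × ℝ) (R : ℝ) (hR : 0 < R) :
    ∫⁻ p in {p : ℝ × ℝ |
        (p.1 + p.2 - c.1) ^ 2 + (p.1 - p.2 - c.2.1) ^ 2 + (4 * p.1 * p.2 - c.2.2) ^ 2 ≤ R ^ 2},
      ENNReal.ofReal (2 * Real.sqrt (1 + 8 * p.1 ^ 2)) ≤ ENNReal.ofReal (Real.pi * R ^ 2) := by
  obtain ⟨a, b, e⟩ := c
  set A : Set (ℝ × ℝ) := {p : ℝ × ℝ |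
      (p.1 + p.2 - a) ^ 2 + (p.1 - p.2 - b) ^ 2 + (4 * p.1 * p.2 - e) ^ 2 ≤ R ^ 2} with hA
  have hAmeas : MeasurableSet A := by
    apply measurableSet_le
    · fun_prop
    · fun_prop
  have hsec : ∀ s : ℝ, MeasurableSet
      {t : ℝ | (s + t - a) ^ 2 + (s - t - b) ^ 2 + (4 * s * t - e) ^ 2 ≤ R ^ 2} := by
    intro s
    apply measurableSet_le
    · fun_prop
    · fun_prop
  have hf : Measurable fun p : ℝ × ℝ => ENNReal.ofReal (2 * Real.sqrt (1 + 8 * p.1 ^ 2)) := by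
    fun_prop
  calc ∫⁻ p in A, ENNReal.ofReal (2 * Real.sqrt (1 + 8 * p.1 ^ 2))
      = ∫⁻ p, A.indicator (fun p : ℝ × ℝ =>
          ENNReal.ofReal (2 * Real.sqrt (1 + 8 * p.1 ^ 2))) p := (lintegral_indicator hAmeas _).symm
    _ = ∫⁻ s : ℝ, ∫⁻ t : ℝ, A.indicator (fun p : ℝ × ℝ =>
          ENNReal.ofReal (2 * Real.sqrt (1 + 8 * p.1 ^ 2))) (s, t) := by
        rw [Measure.volume_eq_prod, lintegral_prod]
        exact (hf.indicator hAmeas).aemeasurable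
    _ = ∫⁻ s : ℝ, ENNReal.ofReal (2 * Real.sqrt (1 + 8 * s ^ 2)) *
          volume {t : ℝ | (s + t - a) ^ 2 + (s - t - b) ^ 2 + (4 * s * t - e) ^ 2 ≤ R ^ 2} := by
        refine lintegral_congr fun s => ?_
        have hptwise : ∀ t : ℝ, A.indicator (fun p : ℝ × ℝ =>
            ENNReal.ofReal (2 * Real.sqrt (1 + 8 * p.1 ^ 2))) (s, t) =
            Set.indicator {t : ℝ | (s + t - a) ^ 2 + (s - t - b) ^ 2 + (4 * s * t - e) ^ 2 ≤ R ^ 2}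
              (fun _ => ENNReal.ofReal (2 * Real.sqrt (1 + 8 * s ^ 2))) t := by
          intro t
          simp only [Set.indicator_apply, hA, Set.mem_setOf_eq]
        rw [lintegral_congr hptwise, lintegral_indicator_const (hsec s)]
    _ ≤ ∫⁻ s : ℝ, ENNReal.ofReal (2 * Real.sqrt 2 *
          Real.sqrt (R ^ 2 - 2 * (s - (a + b) / 2) ^ 2)) :=
        lintegral_mono fun s => saddle_sec_bound a b e R s hR
    _ ≤ ENNReal.ofReal (Real.pi * R ^ 2) := saddle_final_integral R ((a + b) / 2) hR
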